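/- Let G be a finite group, let π be a unitary representation of G on a complex Hilbert space H of finite dimension d ≥ 1 with |G| ≥ d, and let η ∈ H be such that the family (π(x)η)_{x∈G} is full spark, i.e. for every subset S ⊆ G with |S| = d, the vectors {π(x)η : x ∈ S} are linearly independent. Then p₀(π,η) = (d − 1)/|G|. -/

import Mathlib

/-- `p₀(π,η)`: the maximal proportion of zeros in the matrix coefficients
`V_η f = ⟨f, π(·)η⟩`, over all nonzero `f`. -/
noncomputable def p0Vec {G : Type*} [Group G] [Finite G]
    {H : Type*} [NormedAddCommGroup H] [InnerProductSpace ℂ H]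
    (π : G →* (H ≃ₗᵢ[ℂ] H)) (η : H) : ℝ :=
  sSup {t : ℝ | ∃ f : H, f ≠ 0 ∧
    t = 1 - (Nat.card {x : G | (inner ℂ f (π x η) : ℂ) ≠ 0} : ℝ) / (Nat.card G : ℝ)}

/-- If the orbit `(π(x)η)_{x ∈ G}` is full spark (every `d = dim H` of its members are
linearly independent), then `p₀(π,η) = (d-1)/|G|`. -/
theorem p0_of_full_spark
    {G : Type*} [Group G] [Fintype G]
    {H : Type*} [NormedAddCommGroup H] [InnerProductSpace ℂ H] [FiniteDimensional ℂ H]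
    (π : G →* (H ≃ₗᵢ[ℂ] H)) (η : H)
    (hd : 1 ≤ Module.finrank ℂ H)
    (hGd : Module.finrank ℂ H ≤ Fintype.card G)
    (hspark : ∀ S : Finset G, S.card = Module.finrank ℂ H →
      LinearIndependent ℂ (fun s : S => π (s : G) η)) :
    p0Vec π η = ((Module.finrank ℂ H : ℝ) - 1) / (Nat.card G : ℝ) := by
  classical
  set d := Module.finrank ℂ H with hdef
  set n := Fintype.card G with hndef
  have hn : 0 < n := Fintype.card_pos
  have hnG : (Nat.card G : ℝ) = (n : ℝ) := by rw [Nat.card_eq_fintype_card]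
  have hnne : (n : ℝ) ≠ 0 := Nat.cast_ne_zero.mpr hn.ne'
  -- key upper bound on the zero set
  have key : ∀ f : H, f ≠ 0 →
      (Finset.univ.filter fun x : G => ¬ ((inner ℂ f (π x η) : ℂ) ≠ 0)).card ≤ d - 1 := by
    intro f hf
    by_contra hlt
    rw [not_le] at hlt
    have hd' : d ≤ (Finset.univ.filter fun x : G => ¬ ((inner ℂ f (π x η) : ℂ) ≠ 0)).card := by
      omega
    obtain ⟨S, hS_sub, hS_card⟩ := Finset.exists_subset_card_eq (s := _) hd'
    have hli := hspark S hS_card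
    have hmem : ∀ s : S, (π (s : G) η) ∈ (ℂ ∙ f)ᗮ := by
      intro s
      rw [Submodule.mem_orthogonal]
      intro u hu
      obtain ⟨c, rfl⟩ := Submodule.mem_span_singleton.mp hu
      have hz : (inner ℂ f (π (s : G) η) : ℂ) = 0 := by
        have := hS_sub s.2
        have := (Finset.mem_filter.mp this).2
        simpa using this
      rw [inner_smul_left, hz, mul_zero]
    have hli' : LinearIndependent ℂ (fun s : S => (⟨π (s : G) η, hmem s⟩ : (ℂ ∙ f)ᗮ)) := by
      apply LinearIndependent.of_comp ((ℂ ∙ f)ᗮ).subtype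
      exact hli
    have hcard := hli'.fintype_card_le_finrank
    have hrank : Module.finrank ℂ (ℂ ∙ f) + Module.finrank ℂ ((ℂ ∙ f)ᗮ : Submodule ℂ H) = d :=
      Submodule.finrank_add_finrank_orthogonal _
    rw [finrank_span_singleton hf] at hrank
    rw [Fintype.card_coe, hS_card] at hcard
    omega
  -- helper: value computation for any f
  have valcomp : ∀ f : H,
      (Nat.card {x : G | (inner ℂ f (π x η) : ℂ) ≠ 0} : ℕ) =
        n - (Finset.univ.filter fun x : G => ¬ ((inner ℂ f (π x η) : ℂ) ≠ 0)).card := by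
    intro f
    have h1 : Nat.card {x : G | (inner ℂ f (π x η) : ℂ) ≠ 0} =
        (Finset.univ.filter fun x : G => (inner ℂ f (π x η) : ℂ) ≠ 0).card := by
      rw [Nat.card_eq_fintype_card]
      simp [Fintype.card_subtype]
    have h2 := Finset.card_filter_add_card_filter_not
      (s := (Finset.univ : Finset G)) (p := fun x : G => (inner ℂ f (π x η) : ℂ) ≠ 0)
    rw [Finset.card_univ] at h2
    omega
  set A : Set ℝ := {t : ℝ | ∃ f : H, f ≠ 0 ∧
    t = 1 - (Nat.card {x : G | (inner ℂ f (π x η) : ℂ) ≠ 0} : ℝ) / (Nat.card G : ℝ)} with hA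
  have hub : ∀ t ∈ A, t ≤ ((d : ℝ) - 1) / (Nat.card G : ℝ) := by
    rintro t ⟨f, hf, rfl⟩
    have hk := key f hf
    have hv := valcomp f
    have hge : (n : ℝ) - ((d : ℝ) - 1) ≤ (Nat.card {x : G | (inner ℂ f (π x η) : ℂ) ≠ 0} : ℝ) := by
      have : n - (d - 1) ≤ Nat.card {x : G | (inner ℂ f (π x η) : ℂ) ≠ 0} := by omega
      have hcast : ((n - (d - 1) : ℕ) : ℝ) ≤ (Nat.card {x : G | (inner ℂ f (π x η) : ℂ) ≠ 0} : ℝ) :=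
        Nat.cast_le.mpr this
      have : ((n - (d - 1) : ℕ) : ℝ) = (n : ℝ) - ((d : ℝ) - 1) := by
        rw [Nat.cast_sub (by omega), Nat.cast_sub hd]
        push_cast
        ring
      linarith
    rw [hnG]
    have hpos : (0:ℝ) < (n : ℝ) := by positivity
    calc 1 - (Nat.card {x : G | (inner ℂ f (π x η) : ℂ) ≠ 0} : ℝ) / (n : ℝ)
        ≤ 1 - ((n : ℝ) - ((d : ℝ) - 1)) / (n : ℝ) := by gcongr
      _ = ((d : ℝ) - 1) / (n : ℝ) := by field_simp; ring
  -- existence of an optimal f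
  obtain ⟨S, hS_sub, hS_card⟩ := Finset.exists_subset_card_eq (s := (Finset.univ : Finset G)) (n := d - 1)
    (by rw [Finset.card_univ]; omega)
  set K : Submodule ℂ H := Submodule.span ℂ ((S.image fun x : G => π x η : Finset H) : Set H)
    with hK
  have hKrank : Module.finrank ℂ K ≤ d - 1 := by
    refine le_trans (finrank_span_finset_le_card _) ?_
    exact le_trans (Finset.card_image_le) (le_of_eq hS_card)
  have hKne : K ≠ ⊤ := by
    intro h
    have : Module.finrank ℂ K = d := by rw [h]; exact finrank_top ℂ H
    omega
  have hKo : Kᗮ ≠ ⊥ := by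
    intro h
    exact hKne (Submodule.orthogonal_eq_bot_iff.mp h)
  obtain ⟨f, hfK, hf⟩ := Submodule.exists_mem_ne_zero_of_ne_bot hKo
  have hzero : ∀ x ∈ S, (inner ℂ f (π x η) : ℂ) = 0 := by
    intro x hx
    have hxK : π x η ∈ K := Submodule.subset_span (by
      simp only [Finset.coe_image, Set.mem_image]
      exact ⟨x, hx, rfl⟩)
    have := (Submodule.mem_orthogonal _ _).mp hfK _ hxK
    rw [← inner_eq_zero_symm]
    exact this
  have hSsub : S ⊆ Finset.univ.filter fun x : G => ¬ ((inner ℂ f (π x η) : ℂ) ≠ 0) := by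
    intro x hx
    simp only [Finset.mem_filter, Finset.mem_univ, true_and, not_not]
    exact hzero x hx
  have hcard_eq : (Finset.univ.filter fun x : G => ¬ ((inner ℂ f (π x η) : ℂ) ≠ 0)).card = d - 1 := by
    have h1 := Finset.card_le_card hSsub
    have h2 := key f hf
    omega
  have hmemA : ((d : ℝ) - 1) / (Nat.card G : ℝ) ∈ A := by
    refine ⟨f, hf, ?_⟩
    have hv := valcomp f
    rw [hcard_eq] at hv
    rw [hv, hnG]
    have hcast : ((n - (d - 1) : ℕ) : ℝ) = (n : ℝ) - ((d : ℝ) - 1) := by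
      rw [Nat.cast_sub (by omega), Nat.cast_sub hd]
      push_cast
      ring
    rw [hcast]
    field_simp
    ring
  have : IsGreatest A (((d : ℝ) - 1) / (Nat.card G : ℝ)) := ⟨hmemA, hub⟩
  rw [p0Vec]
  exact this.csSup_eq
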